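/- Let ν be a fully supported, non-atomic Borel probability measure on [0,1]. For any function f : [0,1] → ℝ of bounded variation, define ‖f‖_{BV_ν} := inf{ var(f̃) : f̃ = f ν-a.e. } + ν(|f|) and ‖f‖_{BV_1} := inf{ var(f̃) : f̃ = f Leb-a.e. } + ∫|f| dLeb. Then (1/2)‖f‖_{BV_1} ≤ ‖f‖_{BV_ν} ≤ 2‖f‖_{BV_1}. -/

import Mathlib

open MeasureTheory Set
open scoped ENNReal NNReal Classical

/-- The BV norm with respect to a measure `ν` on `[0,1]`:
`inf { var(f̃) : f̃ = f ν-a.e., f̃ of bounded variation } + ν(|f|)`. -/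
noncomputable def bvNormWrt (ν : Measure ℝ) (f : ℝ → ℝ) : ℝ :=
  sInf {v : ℝ | ∃ g : ℝ → ℝ, BoundedVariationOn g (Set.Icc 0 1) ∧ g =ᵐ[ν] f ∧
      v = (eVariationOn g (Set.Icc 0 1)).toReal} +
    ∫ x, |f x| ∂ν


lemma evar_le_of_approx {φ g : ℝ → ℝ} {A B : Set ℝ}
    (H : ∀ x ∈ B, ∀ ε : ℝ, 0 < ε → ∀ a b : ℝ, a < x → x < b →
      ∃ c ∈ A, a < c ∧ c < b ∧ |φ x - g c| < ε) :
    eVariationOn φ B ≤ eVariationOn g A := by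
  refine iSup_le ?_
  rintro ⟨n, u, hu, us⟩
  dsimp only
  refine ENNReal.le_of_forall_pos_le_add fun ε hε _ => ?_
  set δ : ℝ := (ε : ℝ) / (2 * (n + 1)) with hδdef
  have hδ : 0 < δ := by positivity
  have key : ∀ m : ℕ, ∀ b : ℝ, u m < b → ∃ v : ℕ → ℝ, Monotone v ∧ (∀ i, v i ∈ A) ∧
      (∀ i, m ≤ i → v i = v m) ∧ v m < b ∧ (∀ i ≤ m, |φ (u i) - g (v i)| < δ) := by
    intro m
    induction m with
    | zero =>
      intro b hb
      obtain ⟨c, hcA, _, hcb, hcd⟩ := H (u 0) (us 0) δ hδ (u 0 - 1) b (by linarith) hb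
      exact ⟨fun _ => c, monotone_const, fun _ => hcA, fun _ _ => rfl, hcb,
        fun i hi => by simpa [Nat.le_zero.mp hi] using hcd⟩
    | succ m ih =>
      intro b hb
      rcases eq_or_lt_of_le (hu (Nat.le_succ m)) with heq | hlt
      · obtain ⟨v, hv, hvA, hvc, hvb, hvd⟩ := ih b (heq ▸ hb)
        refine ⟨v, hv, hvA,
          fun i hi => by rw [hvc i (le_trans (Nat.le_succ m) hi), hvc (m+1) (Nat.le_succ m)],
          by rw [hvc (m+1) (Nat.le_succ m)]; exact hvb, fun i hi => ?_⟩
        rcases Nat.lt_succ_iff_lt_or_eq.mp (Nat.lt_succ_of_le hi) with h' | h'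
        · exact hvd i (Nat.lt_succ_iff.mp h')
        · subst h'
          rw [hvc (m+1) (Nat.le_succ m), ← heq]
          exact hvd m le_rfl
      · set mid := (u m + u (m+1)) / 2 with hmid
        obtain ⟨v, hv, hvA, hvc, hvb, hvd⟩ := ih mid (by rw [hmid]; linarith)
        obtain ⟨c, hcA, hcmid, hcb, hcd⟩ :=
          H (u (m+1)) (us (m+1)) δ hδ mid b (by rw [hmid]; linarith) hb
        have hvmc : v m < c := lt_trans hvb hcmid
        refine ⟨fun i => if i ≤ m then v i else c, ?_, ?_, ?_, ?_, ?_⟩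
        · intro i j hij
          by_cases hi : i ≤ m <;> by_cases hj : j ≤ m <;> simp [hi, hj]
          · exact hv hij
          · exact le_of_lt (lt_of_le_of_lt (hv hi) hvmc)
          · omega
        · intro i; by_cases hi : i ≤ m <;> simp [hi, hvA, hcA]
        · intro i hi
          have h1 : ¬ i ≤ m := by omega
          have h2 : ¬ m + 1 ≤ m := by omega
          simp [h1, h2]
        · simpa using hcb
        · intro i hi
          by_cases h' : i ≤ m
          · simpa [h'] using hvd i h'
          · have : i = m + 1 := by omega
            subst this
            simpa using hcd
  obtain ⟨v, hv, hvA, _, _, hvd⟩ := key n (u n + 1) (lt_add_one _)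
  have step : ∀ i < n, edist (φ (u (i+1))) (φ (u i)) ≤
      edist (g (v (i+1))) (g (v i)) + (ENNReal.ofReal δ + ENNReal.ofReal δ) := by
    intro i hi
    have e1 : edist (φ (u (i+1))) (g (v (i+1))) ≤ ENNReal.ofReal δ := by
      rw [edist_dist, Real.dist_eq]
      exact ENNReal.ofReal_le_ofReal (le_of_lt (hvd (i+1) hi))
    have e2 : edist (g (v i)) (φ (u i)) ≤ ENNReal.ofReal δ := by
      rw [edist_dist, dist_comm, Real.dist_eq]
      exact ENNReal.ofReal_le_ofReal (le_of_lt (hvd i (le_of_lt hi)))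
    calc edist (φ (u (i+1))) (φ (u i))
        ≤ edist (φ (u (i+1))) (g (v (i+1))) + edist (g (v (i+1))) (g (v i))
            + edist (g (v i)) (φ (u i)) := edist_triangle4 _ _ _ _
      _ ≤ ENNReal.ofReal δ + edist (g (v (i+1))) (g (v i)) + ENNReal.ofReal δ := by
          gcongr
      _ = edist (g (v (i+1))) (g (v i)) + (ENNReal.ofReal δ + ENNReal.ofReal δ) := by ring
  calc ∑ i ∈ Finset.range n, edist (φ (u (i + 1))) (φ (u i))
      ≤ ∑ i ∈ Finset.range n,
          (edist (g (v (i+1))) (g (v i)) + (ENNReal.ofReal δ + ENNReal.ofReal δ)) :=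
        Finset.sum_le_sum fun i hi => step i (Finset.mem_range.mp hi)
    _ = (∑ i ∈ Finset.range n, edist (g (v (i+1))) (g (v i)))
          + n * (ENNReal.ofReal δ + ENNReal.ofReal δ) := by
        rw [Finset.sum_add_distrib, Finset.sum_const, Finset.card_range, nsmul_eq_mul]
    _ ≤ eVariationOn g A + ↑ε := by
        gcongr
        · exact eVariationOn.sum_le (f := g) (n := n) hv hvA
        · have h1 : (n : ℝ≥0∞) * (ENNReal.ofReal δ + ENNReal.ofReal δ)
              = ENNReal.ofReal (n * (2 * δ)) := by
            rw [← ENNReal.ofReal_add (le_of_lt hδ) (le_of_lt hδ),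
              ENNReal.ofReal_mul (by positivity), ENNReal.ofReal_natCast]
            ring_nf
          rw [h1, ← ENNReal.ofReal_coe_nnreal]
          apply ENNReal.ofReal_le_ofReal
          rw [hδdef]
          have hc : (0:ℝ) ≤ (ε:ℝ) := ε.coe_nonneg
          have hn : (0:ℝ) ≤ (n:ℝ) := Nat.cast_nonneg n
          have hn1 : (0:ℝ) < (n:ℝ) + 1 := by positivity
          have heq2 : (n:ℝ) * (2 * ((ε:ℝ) / (2 * ((n:ℝ)+1)))) = (ε:ℝ) * ((n:ℝ)/((n:ℝ)+1)) := by
            field_simp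
          rw [heq2]
          exact mul_le_of_le_one_right hc ((div_le_one hn1).mpr (by linarith))



lemma exists_notMem_countable {D : Set ℝ} (hD : D.Countable) {l r : ℝ} (hlr : l < r) :
    ∃ c, c ∈ Ioo l r ∧ c ∉ D := by
  by_contra hcon
  push_neg at hcon
  have hsub : Ioo l r ⊆ D := fun c hc => hcon c hc
  have h0 : volume (Ioo l r) = 0 := (hD.mono hsub).measure_zero volume
  rw [Real.volume_Ioo] at h0
  exact absurd h0 (by simp [ENNReal.ofReal_eq_zero]; linarith)

lemma exists_subIcc {x a b : ℝ} (hx : x ∈ Icc (0:ℝ) 1) (hax : a < x) (hxb : x < b) :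
    ∃ α β : ℝ, 0 ≤ α ∧ α < β ∧ β ≤ 1 ∧ Icc α β ⊆ Ioo a b := by
  obtain ⟨hx0, hx1⟩ := hx
  rcases lt_or_eq_of_le hx1 with h1 | h1
  · refine ⟨x, min ((x + b)/2) 1, hx0, lt_min (by linarith) h1, min_le_right _ _, ?_⟩
    intro c hc
    exact ⟨lt_of_lt_of_le hax hc.1, lt_of_le_of_lt hc.2 (lt_of_le_of_lt (min_le_left _ _) (by linarith))⟩
  · refine ⟨max ((a + 1)/2) 0, 1, le_max_right _ _, max_lt (by linarith [h1 ▸ hax]) one_pos, le_refl _, ?_⟩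
    intro c hc
    constructor
    · calc a < (a+1)/2 := by linarith [h1 ▸ hax]
        _ ≤ max ((a+1)/2) 0 := le_max_left _ _
        _ ≤ c := hc.1
    · exact lt_of_le_of_lt hc.2 (h1 ▸ hxb)

lemma bv_le_two (μ₁ μ₂ : Measure ℝ) [hpm₁ : IsProbabilityMeasure μ₁] [hpm₂ : IsProbabilityMeasure μ₂]
    (h₁s : μ₁ (Icc (0:ℝ) 1)ᶜ = 0) (h₂s : μ₂ (Icc (0:ℝ) 1)ᶜ = 0)
    (h₁f : ∀ a b : ℝ, 0 ≤ a → a < b → b ≤ 1 → 0 < μ₁ (Icc a b))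
    (h₂f : ∀ a b : ℝ, 0 ≤ a → a < b → b ≤ 1 → 0 < μ₂ (Icc a b))
    (h₁a : ∀ x : ℝ, μ₁ {x} = 0) (h₂a : ∀ x : ℝ, μ₂ {x} = 0)
    (f : ℝ → ℝ) (hf : BoundedVariationOn f (Icc 0 1)) :
    bvNormWrt μ₁ f ≤ 2 * bvNormWrt μ₂ f := by
  have h01 : (0:ℝ) ∈ Icc (0:ℝ) 1 := by norm_num
  have h11 : (1:ℝ) ∈ Icc (0:ℝ) 1 := by norm_num
  obtain ⟨p, q, hp, hq, hpq⟩ := hf.locallyBoundedVariationOn.exists_monotoneOn_sub_monotoneOn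
  obtain ⟨P, hP, hpP⟩ := hp.exists_monotone_extension
    ⟨p 0, by rintro y ⟨c, hc, rfl⟩; exact hp h01 hc hc.1⟩
    ⟨p 1, by rintro y ⟨c, hc, rfl⟩; exact hp hc h11 hc.2⟩
  obtain ⟨Q, hQ, hqQ⟩ := hq.exists_monotone_extension
    ⟨q 0, by rintro y ⟨c, hc, rfl⟩; exact hq h01 hc hc.1⟩
    ⟨q 1, by rintro y ⟨c, hc, rfl⟩; exact hq hc h11 hc.2⟩
  have hfPQ : ∀ x ∈ Icc (0:ℝ) 1, f x = P x - Q x := by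
    intro x hx
    rw [hpq, Pi.sub_apply, hpP hx, hqQ hx]
  set D : Set ℝ := {x | ¬ContinuousAt P x} ∪ {x | ¬ContinuousAt Q x} with hDdef
  have hD : D.Countable := hP.countable_not_continuousAt.union hQ.countable_not_continuousAt
  set C : Set ℝ := Icc 0 1 \ D with hCdef
  have hCI : C ⊆ Icc (0:ℝ) 1 := diff_subset
  have hCdense : ∀ l r : ℝ, 0 ≤ l → l < r → r ≤ 1 → ∃ c ∈ C, l < c ∧ c < r := by
    intro l r hl hlr hr
    obtain ⟨c, hcIoo, hcD⟩ := exists_notMem_countable hD hlr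
    exact ⟨c, ⟨⟨by linarith [hcIoo.1], by linarith [hcIoo.2]⟩, hcD⟩, hcIoo.1, hcIoo.2⟩
  set M := eVariationOn f C with hMdef
  have hMfin : M ≠ ⊤ := ne_top_of_le_ne_top hf (eVariationOn.mono f hCI)
  have hcont : ∀ x ∈ C, ∀ ε : ℝ, 0 < ε →
      ∃ δ : ℝ, 0 < δ ∧ ∀ y ∈ Icc (0:ℝ) 1, |y - x| < δ → |f y - f x| < ε := by
    intro x hx ε hε
    have hPx : ContinuousAt P x := by
      by_contra hc; exact hx.2 (Or.inl hc)
    have hQx : ContinuousAt Q x := by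
      by_contra hc; exact hx.2 (Or.inr hc)
    obtain ⟨δ₁, hδ₁, hP1⟩ := Metric.continuousAt_iff.mp hPx (ε/2) (by linarith)
    obtain ⟨δ₂, hδ₂, hQ1⟩ := Metric.continuousAt_iff.mp hQx (ε/2) (by linarith)
    refine ⟨min δ₁ δ₂, lt_min hδ₁ hδ₂, fun y hy hyx => ?_⟩
    have e1 := hP1 (show dist y x < δ₁ by
      rw [Real.dist_eq]; exact lt_of_lt_of_le hyx (min_le_left _ _))
    have e2 := hQ1 (show dist y x < δ₂ by
      rw [Real.dist_eq]; exact lt_of_lt_of_le hyx (min_le_right _ _))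
    rw [Real.dist_eq] at e1 e2
    rw [hfPQ y hy, hfPQ x (hCI hx)]
    have hre : P y - Q y - (P x - Q x) = (P y - P x) - (Q y - Q x) := by ring
    rw [hre]
    calc |(P y - P x) - (Q y - Q x)| ≤ |P y - P x| + |Q y - Q x| := abs_sub _ _
      _ < ε := by linarith
  -- lower bound on variation of any a.e. representative
  have lbound : ∀ μ : Measure ℝ, (∀ a b : ℝ, 0 ≤ a → a < b → b ≤ 1 → 0 < μ (Icc a b)) →
      ∀ g : ℝ → ℝ, g =ᵐ[μ] f → M ≤ eVariationOn g (Icc 0 1) := by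
    intro μ hfull g hae
    apply evar_le_of_approx
    intro x hx ε hε a b hax hxb
    obtain ⟨δ, hδ, hδ1⟩ := hcont x hx ε hε
    have hax' : max a (x - δ) < x := max_lt hax (by linarith)
    have hxb' : x < min b (x + δ) := lt_min hxb (by linarith)
    obtain ⟨α, β, hα, hαβ, hβ, hsub⟩ := exists_subIcc (hCI hx) hax' hxb'
    have hT : μ {y | ¬ g y = f y} = 0 := ae_iff.mp hae
    have hpos : 0 < μ (Icc α β ∩ {y | g y = f y}) := by
      by_contra hc
      push_neg at hc
      have h0 : μ (Icc α β ∩ {y | g y = f y}) = 0 := le_antisymm (by simpa using hc) zero_le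
      have hle : μ (Icc α β) ≤ μ (Icc α β ∩ {y | g y = f y}) + μ {y | ¬ g y = f y} := by
        refine le_trans (measure_mono ?_) (measure_union_le _ _)
        intro y hy
        by_cases hgy : g y = f y
        · exact Or.inl ⟨hy, hgy⟩
        · exact Or.inr hgy
      rw [h0, hT, add_zero] at hle
      exact absurd (le_antisymm hle zero_le) (ne_of_gt (hfull α β hα hαβ hβ))
    obtain ⟨c, hcmem⟩ := nonempty_of_measure_ne_zero (ne_of_gt hpos)
    have hcIcc : c ∈ Icc (0:ℝ) 1 := ⟨le_trans hα hcmem.1.1, le_trans hcmem.1.2 hβ⟩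
    have hcab : c ∈ Ioo (max a (x - δ)) (min b (x + δ)) := hsub hcmem.1
    refine ⟨c, hcIcc, lt_of_le_of_lt (le_max_left _ _) hcab.1,
      lt_of_lt_of_le hcab.2 (min_le_left _ _), ?_⟩
    rw [hcmem.2]
    rw [abs_sub_comm]
    apply hδ1 c hcIcc
    have l1 : x - δ ≤ max a (x - δ) := le_max_right _ _
    have l2 : min b (x + δ) ≤ x + δ := min_le_right _ _
    rw [abs_lt]
    constructor <;> [linarith [hcab.1]; linarith [hcab.2]]
  -- the good representative
  set L : ℝ → ℝ := fun x => sSup (P '' (C ∩ Iio x)) - sSup (Q '' (C ∩ Iio x)) with hLdef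
  set R : ℝ := sInf (P '' (C ∩ Ioi 0)) - sInf (Q '' (C ∩ Ioi 0)) with hRdef
  set h : ℝ → ℝ := fun x => if x ∈ Icc (0:ℝ) 1 ∧ x ∈ D then (if x = 0 then R else L x) else f x
    with hhdef
  have hhvar : eVariationOn h (Icc (0:ℝ) 1) ≤ M := by
    apply evar_le_of_approx
    intro x hx ε hε a b hax hxb
    by_cases hxD : x ∈ D
    · by_cases hx0 : x = 0
      · -- right limit at 0
        subst hx0
        have hhx : h 0 = R := by rw [hhdef]; simp [hxD, h01]
        obtain ⟨c₁, hc₁C, hc₁l, hc₁r⟩ := hCdense 0 1 le_rfl one_pos le_rfl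
        have hPne : (P '' (C ∩ Ioi (0:ℝ))).Nonempty := ⟨P c₁, c₁, ⟨hc₁C, hc₁l⟩, rfl⟩
        have hQne : (Q '' (C ∩ Ioi (0:ℝ))).Nonempty := ⟨Q c₁, c₁, ⟨hc₁C, hc₁l⟩, rfl⟩
        have hPbd : BddBelow (P '' (C ∩ Ioi (0:ℝ))) := by
          refine ⟨P 0, ?_⟩; rintro y ⟨c, hc, rfl⟩; exact hP (le_of_lt hc.2)
        have hQbd : BddBelow (Q '' (C ∩ Ioi (0:ℝ))) := by
          refine ⟨Q 0, ?_⟩; rintro y ⟨c, hc, rfl⟩; exact hQ (le_of_lt hc.2)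
        set IP := sInf (P '' (C ∩ Ioi (0:ℝ))) with hIP
        set IQ := sInf (Q '' (C ∩ Ioi (0:ℝ))) with hIQ
        obtain ⟨yP, ⟨cP, hcP, rfl⟩, hyP⟩ :=
          exists_lt_of_csInf_lt hPne (lt_add_of_pos_right IP (by linarith : (0:ℝ) < ε/4))
        obtain ⟨yQ, ⟨cQ, hcQ, rfl⟩, hyQ⟩ :=
          exists_lt_of_csInf_lt hQne (lt_add_of_pos_right IQ (by linarith : (0:ℝ) < ε/4))
        have hr0 : 0 < min (min b 1) (min cP cQ) :=
          lt_min (lt_min hxb one_pos) (lt_min hcP.2 hcQ.2)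
        have hr1 : min (min b 1) (min cP cQ) ≤ 1 :=
          le_trans (min_le_left _ _) (min_le_right _ _)
        obtain ⟨c, hcC, hcl, hcr⟩ := hCdense 0 _ le_rfl hr0 hr1
        have hccP : c ≤ cP := le_trans (le_of_lt hcr)
          (le_trans (min_le_right _ _) (min_le_left _ _))
        have hccQ : c ≤ cQ := le_trans (le_of_lt hcr)
          (le_trans (min_le_right _ _) (min_le_right _ _))
        have hcb : c < b := lt_of_lt_of_le hcr (le_trans (min_le_left _ _) (min_le_left _ _))
        refine ⟨c, hcC, by linarith, hcb, ?_⟩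
        rw [hhx, hfPQ c (hCI hcC)]
        have hPc1 : IP ≤ P c := csInf_le hPbd ⟨c, ⟨hcC, hcl⟩, rfl⟩
        have hPc2 : P c < IP + ε/4 := lt_of_le_of_lt (hP hccP) hyP
        have hQc1 : IQ ≤ Q c := csInf_le hQbd ⟨c, ⟨hcC, hcl⟩, rfl⟩
        have hQc2 : Q c < IQ + ε/4 := lt_of_le_of_lt (hQ hccQ) hyQ
        rw [hRdef]
        have hre : IP - IQ - (P c - Q c) = (IP - P c) - (IQ - Q c) := by ring
        rw [hre]
        calc |(IP - P c) - (IQ - Q c)| ≤ |IP - P c| + |IQ - Q c| := abs_sub _ _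
          _ < ε := by rw [abs_sub_comm IP, abs_sub_comm IQ, abs_of_nonneg (by linarith),
                abs_of_nonneg (by linarith)]; linarith
      · -- left limit at x > 0
        have hx0' : 0 < x := lt_of_le_of_ne hx.1 (Ne.symm hx0)
        have hhx : h x = L x := by rw [hhdef]; simp [hx, hxD, hx0]
        obtain ⟨c₁, hc₁C, hc₁l, hc₁r⟩ := hCdense 0 x le_rfl hx0' hx.2
        have hPne : (P '' (C ∩ Iio x)).Nonempty := ⟨P c₁, c₁, ⟨hc₁C, hc₁r⟩, rfl⟩
        have hQne : (Q '' (C ∩ Iio x)).Nonempty := ⟨Q c₁, c₁, ⟨hc₁C, hc₁r⟩, rfl⟩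
        have hPbd : BddAbove (P '' (C ∩ Iio x)) := by
          refine ⟨P x, ?_⟩; rintro y ⟨c, hc, rfl⟩; exact hP (le_of_lt hc.2)
        have hQbd : BddAbove (Q '' (C ∩ Iio x)) := by
          refine ⟨Q x, ?_⟩; rintro y ⟨c, hc, rfl⟩; exact hQ (le_of_lt hc.2)
        set SP := sSup (P '' (C ∩ Iio x)) with hSP
        set SQ := sSup (Q '' (C ∩ Iio x)) with hSQ
        obtain ⟨yP, ⟨cP, hcP, rfl⟩, hyP⟩ :=
          exists_lt_of_lt_csSup hPne (sub_lt_self SP (by linarith : (0:ℝ) < ε/4))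
        obtain ⟨yQ, ⟨cQ, hcQ, rfl⟩, hyQ⟩ :=
          exists_lt_of_lt_csSup hQne (sub_lt_self SQ (by linarith : (0:ℝ) < ε/4))
        have hl0 : 0 ≤ max (max a 0) (max cP cQ) :=
          le_trans (le_max_right a 0) (le_max_left _ _)
        have hlx : max (max a 0) (max cP cQ) < x :=
          max_lt (max_lt hax hx0') (max_lt hcP.2 hcQ.2)
        obtain ⟨c, hcC, hcl, hcr⟩ := hCdense _ x hl0 hlx hx.2
        have hccP : cP ≤ c := le_of_lt (lt_of_le_of_lt
          (le_trans (le_max_left cP cQ) (le_max_right (max a 0) _)) hcl)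
        have hccQ : cQ ≤ c := le_of_lt (lt_of_le_of_lt
          (le_trans (le_max_right cP cQ) (le_max_right (max a 0) _)) hcl)
        have hca : a < c := lt_of_le_of_lt (le_trans (le_max_left a 0) (le_max_left _ _)) hcl
        refine ⟨c, hcC, hca, by linarith, ?_⟩
        rw [hhx, hfPQ c (hCI hcC)]
        have hPc1 : P c ≤ SP := le_csSup hPbd ⟨c, ⟨hcC, hcr⟩, rfl⟩
        have hPc2 : SP - ε/4 < P c := lt_of_lt_of_le hyP (hP hccP)
        have hQc1 : Q c ≤ SQ := le_csSup hQbd ⟨c, ⟨hcC, hcr⟩, rfl⟩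
        have hQc2 : SQ - ε/4 < Q c := lt_of_lt_of_le hyQ (hQ hccQ)
        rw [hLdef]
        have hre : SP - SQ - (P c - Q c) = (SP - P c) - (SQ - Q c) := by ring
        rw [hre]
        calc |(SP - P c) - (SQ - Q c)| ≤ |SP - P c| + |SQ - Q c| := abs_sub _ _
          _ < ε := by rw [abs_of_nonneg (by linarith), abs_of_nonneg (by linarith)]; linarith
    · refine ⟨x, ⟨hx, hxD⟩, hax, hxb, ?_⟩
      have hhx : h x = f x := by rw [hhdef]; simp [hxD]
      rw [hhx]
      simpa using hε
  have hbvh : BoundedVariationOn h (Icc (0:ℝ) 1) := ne_top_of_le_ne_top hMfin hhvar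
  have hhae : ∀ μ : Measure ℝ, (∀ x : ℝ, μ {x} = 0) → h =ᵐ[μ] f := by
    intro μ hatom
    haveI : NullSingletonClass μ := ⟨hatom⟩
    have hsub : {x : ℝ | ¬ h x = f x} ⊆ D := by
      intro x hx
      by_contra hxD
      apply hx
      rw [hhdef]
      simp [hxD]
    exact measure_mono_null hsub (hD.measure_zero μ)
  have haeI : ∀ μ : Measure ℝ, μ (Icc (0:ℝ) 1)ᶜ = 0 → ∀ᵐ x ∂μ, x ∈ Icc (0:ℝ) 1 := by
    intro μ hs
    exact mem_ae_iff.mpr hs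
  have hmeas : ∀ μ : Measure ℝ, μ (Icc (0:ℝ) 1)ᶜ = 0 → (∀ x : ℝ, μ {x} = 0) →
      AEStronglyMeasurable h μ := by
    intro μ hs hatom
    have h1 : h =ᵐ[μ] (fun x => P x - Q x) :=
      (hhae μ hatom).trans ((haeI μ hs).mono fun x hx => hfPQ x hx)
    exact ((hP.measurable.sub hQ.measurable).aestronglyMeasurable).congr h1.symm
  set Vh := (eVariationOn h (Icc (0:ℝ) 1)).toReal with hVh
  have hVhM : Vh ≤ M.toReal := ENNReal.toReal_mono hMfin hhvar
  have hbound : ∀ x ∈ Icc (0:ℝ) 1, |h x| ≤ |h 0| + Vh := by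
    intro x hx
    have hd := hbvh.dist_le hx h01
    rw [Real.dist_eq] at hd
    calc |h x| = |h 0 + (h x - h 0)| := by ring_nf
      _ ≤ |h 0| + |h x - h 0| := abs_add_le _ _
      _ ≤ |h 0| + Vh := by linarith
  have hint : ∀ μ : Measure ℝ, IsProbabilityMeasure μ → μ (Icc (0:ℝ) 1)ᶜ = 0 →
      (∀ x : ℝ, μ {x} = 0) → Integrable (fun x => |h x|) μ := by
    intro μ hprob hs hatom
    haveI := hprob
    refine ⟨by simpa [Real.norm_eq_abs] using (hmeas μ hs hatom).norm,
      HasFiniteIntegral.of_bounded (C := |h 0| + Vh) (((haeI μ hs).mono fun x hx => ?_))⟩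
    rw [Real.norm_eq_abs, abs_abs]
    exact hbound x hx
  have hsinf : ∀ μ : Measure ℝ, (∀ a b : ℝ, 0 ≤ a → a < b → b ≤ 1 → 0 < μ (Icc a b)) →
      (∀ x : ℝ, μ {x} = 0) →
      sInf {v : ℝ | ∃ g : ℝ → ℝ, BoundedVariationOn g (Icc 0 1) ∧ g =ᵐ[μ] f ∧
        v = (eVariationOn g (Icc 0 1)).toReal} = M.toReal := by
    intro μ hfull hatom
    have hmem : (eVariationOn h (Icc (0:ℝ) 1)).toReal ∈ {v : ℝ | ∃ g : ℝ → ℝ,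
        BoundedVariationOn g (Icc 0 1) ∧ g =ᵐ[μ] f ∧
        v = (eVariationOn g (Icc 0 1)).toReal} := ⟨h, hbvh, hhae μ hatom, rfl⟩
    have hlb : ∀ v ∈ {v : ℝ | ∃ g : ℝ → ℝ, BoundedVariationOn g (Icc 0 1) ∧ g =ᵐ[μ] f ∧
        v = (eVariationOn g (Icc 0 1)).toReal}, M.toReal ≤ v := by
      rintro v ⟨g, hbvg, haeg, rfl⟩
      exact ENNReal.toReal_mono hbvg (lbound μ hfull g haeg)
    refine le_antisymm ?_ (le_csInf ⟨_, hmem⟩ hlb)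
    exact le_trans (csInf_le ⟨M.toReal, hlb⟩ hmem) hVhM
  have hIK : ∫ x, |h x| ∂μ₁ ≤ (∫ y, |h y| ∂μ₂) + Vh := by
    have hK : ∀ x ∈ Icc (0:ℝ) 1, |h x| ≤ (∫ y, |h y| ∂μ₂) + Vh := by
      intro x hx
      have hpt : ∀ᵐ y ∂μ₂, |h x| - Vh ≤ |h y| := by
        refine (haeI μ₂ h₂s).mono fun y hy => ?_
        have hd := hbvh.dist_le hx hy
        rw [Real.dist_eq] at hd
        have habs := abs_sub_abs_le_abs_sub (h x) (h y)
        linarith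
      have hmono := integral_mono_ae (integrable_const (|h x| - Vh))
        (hint μ₂ hpm₂ h₂s h₂a) hpt
      rw [integral_const, probReal_univ, one_smul] at hmono
      linarith
    have hmono := integral_mono_ae (hint μ₁ hpm₁ h₁s h₁a)
      (integrable_const ((∫ y, |h y| ∂μ₂) + Vh)) ((haeI μ₁ h₁s).mono fun x hx => hK x hx)
    rwa [integral_const, probReal_univ, one_smul] at hmono
  have hIfh : ∀ μ : Measure ℝ, (∀ x : ℝ, μ {x} = 0) →
      ∫ x, |f x| ∂μ = ∫ x, |h x| ∂μ := by
    intro μ hatom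
    exact integral_congr_ae ((hhae μ hatom).symm.mono fun x hx => by dsimp only; rw [hx])
  have hM0 : (0:ℝ) ≤ M.toReal := ENNReal.toReal_nonneg
  have hI2 : (0:ℝ) ≤ ∫ x, |h x| ∂μ₂ := integral_nonneg fun x => abs_nonneg _
  unfold bvNormWrt
  rw [hsinf μ₁ h₁f h₁a, hsinf μ₂ h₂f h₂a, hIfh μ₁ h₁a, hIfh μ₂ h₂a]
  linarith

/-- For a fully supported, non-atomic probability measure `ν` on `[0,1]` and a function `f`
of bounded variation, `(1/2)‖f‖_{BV₁} ≤ ‖f‖_{BV_ν} ≤ 2‖f‖_{BV₁}`, where `BV₁` is the BV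
norm with respect to Lebesgue measure on `[0,1]`. -/
theorem stmt1 (ν : Measure ℝ) [IsProbabilityMeasure ν]
    (hsupp : ν (Set.Icc (0:ℝ) 1)ᶜ = 0)
    (hfull : ∀ a b : ℝ, 0 ≤ a → a < b → b ≤ 1 → 0 < ν (Set.Icc a b))
    (hatom : ∀ x : ℝ, ν {x} = 0)
    (f : ℝ → ℝ) (hf : BoundedVariationOn f (Set.Icc 0 1)) :
    (1 / 2) * bvNormWrt (volume.restrict (Set.Icc 0 1)) f ≤ bvNormWrt ν f ∧
      bvNormWrt ν f ≤ 2 * bvNormWrt (volume.restrict (Set.Icc 0 1)) f := by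
  haveI hpv : IsProbabilityMeasure (volume.restrict (Set.Icc (0:ℝ) 1)) := ⟨by
    rw [Measure.restrict_apply_univ, Real.volume_Icc]; norm_num⟩
  have hvs : (volume.restrict (Set.Icc (0:ℝ) 1)) (Set.Icc (0:ℝ) 1)ᶜ = 0 := by
    rw [Measure.restrict_apply measurableSet_Icc.compl]
    simp
  have hvf : ∀ a b : ℝ, 0 ≤ a → a < b → b ≤ 1 →
      0 < (volume.restrict (Set.Icc (0:ℝ) 1)) (Set.Icc a b) := by
    intro a b ha hab hb
    rw [Measure.restrict_apply measurableSet_Icc,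
      inter_eq_left.mpr (Icc_subset_Icc ha hb), Real.volume_Icc]
    exact ENNReal.ofReal_pos.mpr (by linarith)
  have hva : ∀ x : ℝ, (volume.restrict (Set.Icc (0:ℝ) 1)) {x} = 0 := by
    intro x
    rw [Measure.restrict_apply (measurableSet_singleton x)]
    exact measure_mono_null inter_subset_left Real.volume_singleton
  constructor
  · have := bv_le_two (volume.restrict (Set.Icc 0 1)) ν hvs hsupp hvf hfull hva hatom f hf
    linarith
  · exact bv_le_two ν (volume.restrict (Set.Icc 0 1)) hsupp hvs hfull hvf hatom hva f hf
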